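/- For real numbers x, y, define x' = max(0, x) and y' = max(0, y, 2x + y). Then the pair (x', y') obtained from the C₂ mutation sequence (j,k) agrees with the pair obtained from the sequence (k,j,k,j); concretely, composing the four successive piecewise-linear maps corresponding to the mutation sequence (k,j,k,j) applied to (x,y) yields the same result (max(0,x), max(0, y, 2x+y)). Verify this identity by checking all sign cases of x, y, x+y, x+2y. -/

import Mathlib

open Matrix

/-- Fomin–Zelevinsky mutation of a `6 × 3` real extended exchange matrix (rows `0,1,2`
form the exchange part `B`, rows `3,4,5` form the coefficient part `C`) in the
direction of column `l`. -/
noncomputable def extMutation (M : Matrix (Fin 6) (Fin 3) ℝ) (l : Fin 3) : Matrix (Fin 6) (Fin 3) ℝ :=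
  fun i j =>
    if i.val = l.val ∨ j = l then -M i j
    else if 0 < M i l * M (Fin.castLE (by omega) l) j then
      M i j + M i l * |M (Fin.castLE (by omega) l) j|
    else M i j

lemma castLE0 (h : 3 ≤ 6) : Fin.castLE h (0:Fin 3) = (0:Fin 6) := rfl
lemma castLE1 (h : 3 ≤ 6) : Fin.castLE h (1:Fin 3) = (1:Fin 6) := rfl
lemma castLE2 (h : 3 ≤ 6) : Fin.castLE h (2:Fin 3) = (2:Fin 6) := rfl

set_option maxHeartbeats 4000000 in
/-- The `C₂` polygon identity: with exchange entries `b_{jk} = -1`, `b_{kj} = 2`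
(indices `j = 0`, `k = 1`) and a further column `p = 2` with entries `x, y`, starting
with coefficient matrix the identity, the mutation sequence `(j,k)` and the mutation
sequence `(k,j,k,j)` produce the same coefficient matrix, and the `p`-th `c`-column
records the coefficients `x' = max(0,x)`, `y' = max(0, y, 2x + y)`. -/
theorem c2_polygon_identity (x y r₀ r₁ r₂ : ℝ) :
    let M : Matrix (Fin 6) (Fin 3) ℝ :=
      !![0, -1, x; 2, 0, y; r₀, r₁, r₂; 1, 0, 0; 0, 1, 0; 0, 0, 1]
    let M₂ := extMutation (extMutation M 0) 1
    let M₄ := extMutation (extMutation (extMutation (extMutation M 1) 0) 1) 0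
    (∀ i : Fin 3, ∀ q : Fin 3, M₂ ⟨i.val + 3, by omega⟩ q = M₄ ⟨i.val + 3, by omega⟩ q) ∧
      M₂ ⟨3, by omega⟩ 2 = max 0 x ∧
      M₂ ⟨4, by omega⟩ 2 = max 0 (max y (2 * x + y)) ∧
      M₂ ⟨5, by omega⟩ 2 = 1 := by
  intro M M₂ M₄
  obtain ⟨c0, hc0⟩ : ∃ c : ℝ, c = x + min 0 y := ⟨_, rfl⟩
  obtain ⟨c1, hc1⟩ : ∃ c : ℝ, c = -y + 2 * min 0 c0 := ⟨_, rfl⟩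
  obtain ⟨c2, hc2⟩ : ∃ c : ℝ, c = -c0 + min 0 c1 := ⟨_, rfl⟩
  obtain ⟨d, hd⟩ : ∃ c : ℝ, c = y + 2 * max 0 x := ⟨_, rfl⟩
  -- Step A1 : mutation of M at 1
  obtain ⟨g1, h1, i1, hA1⟩ : ∃ g h i, extMutation M 1 =
      !![0,1,c0; -2,0,-y; g,h,i; 1,0,0; 2,-1,max 0 y; 0,0,1] := by
    refine ⟨extMutation M 1 ⟨2, by omega⟩ 0, extMutation M 1 ⟨2, by omega⟩ 1,
      extMutation M 1 ⟨2, by omega⟩ 2, ?_⟩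
    ext i j
    fin_cases i <;> fin_cases j <;>
    · simp only [extMutation, M, Matrix.cons_val', Matrix.cons_val_zero, Matrix.cons_val_one, Matrix.cons_val_two, Matrix.tail_cons,
        Matrix.head_cons, Matrix.head_fin_const, Matrix.cons_val_fin_one, Matrix.cons_val_succ,
        castLE0, castLE1, castLE2, Fin.ext_iff, Fin.isValue]
      norm_num
      try simp only [hc0, hc1, hc2, hd, abs_eq_max_neg, max_def, min_def]
      try (split_ifs <;> norm_num <;> linarith)
      try rfl
  -- Step A2 : mutation at 0
  obtain ⟨g2, h2, i2, hA2⟩ : ∃ g h i,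
      extMutation !![0,1,c0; -2,0,-y; g1,h1,i1; 1,0,0; 2,-1,max 0 y; 0,0,1] 0 =
      !![0,-1,-c0; 2,0,c1; g,h,i; -1,1,max 0 c0; -2,1,max 0 y + 2*max 0 c0; 0,0,1] := by
    set A := !![0,1,c0; -2,0,-y; g1,h1,i1; 1,0,0; 2,-1,max 0 y; 0,0,1] with hA
    refine ⟨extMutation A 0 ⟨2, by omega⟩ 0, extMutation A 0 ⟨2, by omega⟩ 1,
      extMutation A 0 ⟨2, by omega⟩ 2, ?_⟩
    ext i j
    fin_cases i <;> fin_cases j <;>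
    · simp only [extMutation, hA, Matrix.cons_val', Matrix.cons_val_zero, Matrix.cons_val_one, Matrix.cons_val_two, Matrix.tail_cons,
        Matrix.head_cons, Matrix.head_fin_const, Matrix.cons_val_fin_one, Matrix.cons_val_succ,
        castLE0, castLE1, castLE2, Fin.ext_iff, Fin.isValue]
      norm_num
      try simp only [hc0, hc1, hc2, hd, abs_eq_max_neg, max_def, min_def]
      try (split_ifs <;> norm_num <;> linarith)
      try rfl
  -- Step A3 : mutation at 1
  obtain ⟨g3, h3, i3, hA3⟩ : ∃ g h i,
      extMutation !![0,-1,-c0; 2,0,c1; g2,h2,i2; -1,1,max 0 c0; -2,1,max 0 y + 2*max 0 c0; 0,0,1] 1 =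
      !![0,1,c2; -2,0,-c1; g,h,i; 1,-1,max 0 c0 + max 0 c1;
         0,-1,max 0 y + 2*max 0 c0 + max 0 c1; 0,0,1] := by
    set A := !![0,-1,-c0; 2,0,c1; g2,h2,i2; -1,1,max 0 c0; -2,1,max 0 y + 2*max 0 c0; 0,0,1] with hA
    refine ⟨extMutation A 1 ⟨2, by omega⟩ 0, extMutation A 1 ⟨2, by omega⟩ 1,
      extMutation A 1 ⟨2, by omega⟩ 2, ?_⟩
    ext i j
    fin_cases i <;> fin_cases j <;>
    · simp only [extMutation, hA, Matrix.cons_val', Matrix.cons_val_zero, Matrix.cons_val_one, Matrix.cons_val_two, Matrix.tail_cons,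
        Matrix.head_cons, Matrix.head_fin_const, Matrix.cons_val_fin_one, Matrix.cons_val_succ,
        castLE0, castLE1, castLE2, Fin.ext_iff, Fin.isValue]
      norm_num
      try simp only [hc0, hc1, hc2, hd, abs_eq_max_neg, max_def, min_def]
      try (split_ifs <;> norm_num <;> linarith)
      try rfl
  -- Step A4 : mutation at 0
  obtain ⟨g4, h4, i4, hA4⟩ : ∃ g h i,
      extMutation !![0,1,c2; -2,0,-c1; g3,h3,i3; 1,-1,max 0 c0 + max 0 c1;
         0,-1,max 0 y + 2*max 0 c0 + max 0 c1; 0,0,1] 0 =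
      !![0,-1,-c2; 2,0,-c1 + 2*min 0 c2; g,h,i; -1,0,max 0 c0 + max 0 c1 + max 0 c2;
         0,-1,max 0 y + 2*max 0 c0 + max 0 c1; 0,0,1] := by
    set A := !![0,1,c2; -2,0,-c1; g3,h3,i3; 1,-1,max 0 c0 + max 0 c1;
         0,-1,max 0 y + 2*max 0 c0 + max 0 c1; 0,0,1] with hA
    refine ⟨extMutation A 0 ⟨2, by omega⟩ 0, extMutation A 0 ⟨2, by omega⟩ 1,
      extMutation A 0 ⟨2, by omega⟩ 2, ?_⟩
    ext i j
    fin_cases i <;> fin_cases j <;>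
    · simp only [extMutation, hA, Matrix.cons_val', Matrix.cons_val_zero, Matrix.cons_val_one, Matrix.cons_val_two, Matrix.tail_cons,
        Matrix.head_cons, Matrix.head_fin_const, Matrix.cons_val_fin_one, Matrix.cons_val_succ,
        castLE0, castLE1, castLE2, Fin.ext_iff, Fin.isValue]
      norm_num
      try simp only [hc0, hc1, hc2, hd, abs_eq_max_neg, max_def, min_def]
      try (split_ifs <;> norm_num <;> linarith)
      try rfl
  -- Step B1 : mutation of M at 0
  obtain ⟨gb, hb, ib, hB1⟩ : ∃ g h i, extMutation M 0 =
      !![0,1,-x; -2,0,d; g,h,i; -1,0,max 0 x; 0,1,0; 0,0,1] := by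
    refine ⟨extMutation M 0 ⟨2, by omega⟩ 0, extMutation M 0 ⟨2, by omega⟩ 1,
      extMutation M 0 ⟨2, by omega⟩ 2, ?_⟩
    ext i j
    fin_cases i <;> fin_cases j <;>
    · simp only [extMutation, M, Matrix.cons_val', Matrix.cons_val_zero, Matrix.cons_val_one, Matrix.cons_val_two, Matrix.tail_cons,
        Matrix.head_cons, Matrix.head_fin_const, Matrix.cons_val_fin_one, Matrix.cons_val_succ,
        castLE0, castLE1, castLE2, Fin.ext_iff, Fin.isValue]
      norm_num
      try simp only [hc0, hc1, hc2, hd, abs_eq_max_neg, max_def, min_def]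
      try (split_ifs <;> norm_num <;> linarith)
      try rfl
  -- Step B2 : mutation at 1
  obtain ⟨gb2, hb2, ib2, hB2⟩ : ∃ g h i,
      extMutation !![0,1,-x; -2,0,d; gb,hb,ib; -1,0,max 0 x; 0,1,0; 0,0,1] 1 =
      !![0,-1,-x + max 0 d; 2,0,-d; g,h,i; -1,0,max 0 x; 0,-1,max 0 d; 0,0,1] := by
    set A := !![0,1,-x; -2,0,d; gb,hb,ib; -1,0,max 0 x; 0,1,0; 0,0,1] with hA
    refine ⟨extMutation A 1 ⟨2, by omega⟩ 0, extMutation A 1 ⟨2, by omega⟩ 1,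
      extMutation A 1 ⟨2, by omega⟩ 2, ?_⟩
    ext i j
    fin_cases i <;> fin_cases j <;>
    · simp only [extMutation, hA, Matrix.cons_val', Matrix.cons_val_zero, Matrix.cons_val_one, Matrix.cons_val_two, Matrix.tail_cons,
        Matrix.head_cons, Matrix.head_fin_const, Matrix.cons_val_fin_one, Matrix.cons_val_succ,
        castLE0, castLE1, castLE2, Fin.ext_iff, Fin.isValue]
      norm_num
      try simp only [hc0, hc1, hc2, hd, abs_eq_max_neg, max_def, min_def]
      try (split_ifs <;> norm_num <;> linarith)
      try rfl
  have hM2 : M₂ = !![0,-1,-x + max 0 d; 2,0,-d; gb2,hb2,ib2; -1,0,max 0 x; 0,-1,max 0 d; 0,0,1] := by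
    show extMutation (extMutation M 0) 1 = _
    rw [hB1, hB2]
  have hM4 : M₄ = !![0,-1,-c2; 2,0,-c1 + 2*min 0 c2; g4,h4,i4;
      -1,0,max 0 c0 + max 0 c1 + max 0 c2; 0,-1,max 0 y + 2*max 0 c0 + max 0 c1; 0,0,1] := by
    show extMutation (extMutation (extMutation (extMutation M 1) 0) 1) 0 = _
    rw [hA1, hA2, hA3, hA4]
  have key1 : max 0 c0 + max 0 c1 + max 0 c2 = max 0 x := by
    simp only [hc0, hc1, hc2, max_def, min_def]
    split_ifs <;> linarith
  have key2 : max 0 y + 2 * max 0 c0 + max 0 c1 = max 0 d := by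
    simp only [hc0, hc1, hc2, hd, max_def, min_def]
    split_ifs <;> linarith
  have key3 : max 0 d = max 0 (max y (2 * x + y)) := by
    simp only [hd, max_def]
    split_ifs <;> linarith
  refine ⟨?_, ?_, ?_, ?_⟩
  · intro i q
    fin_cases i <;> fin_cases q <;>
    · rw [hM2, hM4]
      norm_num [Matrix.cons_val', Matrix.cons_val_zero, Matrix.cons_val_one, Matrix.cons_val_two, Matrix.tail_cons,
        Matrix.head_cons, Matrix.head_fin_const, Matrix.cons_val_fin_one, Matrix.cons_val_succ,
        Fin.isValue, Fin.ext_iff]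
      try linarith [key1, key2]
  · rw [hM2]
    norm_num [Matrix.cons_val', Matrix.cons_val_zero, Matrix.cons_val_one, Matrix.cons_val_two, Matrix.tail_cons,
      Matrix.head_cons, Matrix.head_fin_const, Matrix.cons_val_fin_one, Matrix.cons_val_succ,
      Fin.isValue, Fin.ext_iff]
  · rw [hM2]
    norm_num [Matrix.cons_val', Matrix.cons_val_zero, Matrix.cons_val_one, Matrix.cons_val_two, Matrix.tail_cons,
      Matrix.head_cons, Matrix.head_fin_const, Matrix.cons_val_fin_one, Matrix.cons_val_succ,
      Fin.isValue, Fin.ext_iff]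
    linarith [key3]
  · rw [hM2]
    norm_num [Matrix.cons_val', Matrix.cons_val_zero, Matrix.cons_val_one, Matrix.cons_val_two, Matrix.tail_cons,
      Matrix.head_cons, Matrix.head_fin_const, Matrix.cons_val_fin_one, Matrix.cons_val_succ,
      Fin.isValue, Fin.ext_iff]
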